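/- Let (V, E, s, t, G, M, ℓ) be a tropical curve datum whose underlying graph is connected. Then the tropical Jacobian TroPic⁰ is a finite group if and only if the datum is log aligned, i.e. for every circuit γ ∈ H₁ there exists an extreme ray F of M such that ℓ(e) ∈ F for every edge e in the support of γ. -/

import Mathlib

namespace TropicalNeron

variable {V E : Type*} [Fintype E]
variable {G : Type*} [AddCommGroup G]

open scoped Classical in
/-- The boundary map `δ : (E → ℤ) → (V → ℤ)` of a graph with source `s` and target `t`. -/
noncomputable def delta (s t : E → V) : (E → ℤ) →+ (V → ℤ) where
  toFun f := fun v => (∑ e, if t e = v then f e else 0) - ∑ e, if s e = v then f e else 0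
  map_zero' := by funext v; simp
  map_add' f g := by
    classical
    funext v
    have h : ∀ w : E → V,
        (∑ e, if w e = v then (f + g) e else 0)
          = (∑ e, if w e = v then f e else 0) + ∑ e, if w e = v then g e else 0 := by
      intro w
      rw [← Finset.sum_add_distrib]
      refine Finset.sum_congr rfl fun e _ => ?_
      by_cases hw : w e = v <;> simp [hw]
    simp only [Pi.add_apply] at *
    rw [h, h]
    ring

/-- The first homology of the graph: the kernel of the boundary map. -/
noncomputable def H1 (s t : E → V) : AddSubgroup (E → ℤ) := (delta s t).ker

/-- The monodromy pairing `⟨γ, γ'⟩ = ∑ e, γ(e)·γ'(e) • ℓ(e)`. -/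
def pairing (ℓ : E → G) (γ γ' : E → ℤ) : G := ∑ e, (γ e * γ' e) • ℓ e

/-- Pairing with a fixed cycle `γ`, as a homomorphism `H₁ → G`. -/
noncomputable def periodHom (s t : E → V) (ℓ : E → G) (γ : H1 s t) : ↥(H1 s t) →+ G where
  toFun γ' := pairing ℓ γ γ'
  map_zero' := by simp [pairing]
  map_add' γ₁ γ₂ := by
    simp only [pairing, AddSubgroup.coe_add, Pi.add_apply, mul_add, add_smul]
    rw [Finset.sum_add_distrib]

/-- The period map `H₁ → Hom(H₁, G)`, `γ ↦ ⟨γ, −⟩`. -/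
noncomputable def periodMap (s t : E → V) (ℓ : E → G) : ↥(H1 s t) →+ (↥(H1 s t) →+ G) where
  toFun := periodHom s t ℓ
  map_zero' := by
    ext γ'
    simp [periodHom, pairing]
  map_add' γ₁ γ₂ := by
    ext γ'
    simp only [periodHom, AddMonoidHom.coe_mk, ZeroHom.coe_mk, AddMonoidHom.add_apply,
      pairing, AddSubgroup.coe_add, Pi.add_apply, add_mul, add_smul]
    rw [Finset.sum_add_distrib]

/-- `a` is bounded by `b` for the order `x ≤ y ↔ y - x ∈ M`. -/
def Bounded (M : AddSubmonoid G) (b a : G) : Prop :=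
  ∃ n m : ℤ, a - n • b ∈ M ∧ m • b - a ∈ M

/-- A homomorphism `φ : H₁ → G` has bounded monodromy if `φ(γ)` is bounded by `⟨γ,γ⟩`
for every `γ ∈ H₁`. -/
def BoundedMonodromy (s t : E → V) (M : AddSubmonoid G) (ℓ : E → G)
    (φ : ↥(H1 s t) →+ G) : Prop :=
  ∀ γ : H1 s t, Bounded M (pairing ℓ γ γ) (φ γ)

/-- The subgroup `Hom(H₁,G)† ⊆ Hom(H₁,G)` of bounded-monodromy homomorphisms. -/
noncomputable def BMHom (s t : E → V) (M : AddSubmonoid G) (ℓ : E → G) :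
    AddSubgroup (↥(H1 s t) →+ G) where
  carrier := {φ | BoundedMonodromy s t M ℓ φ}
  zero_mem' := fun γ => ⟨0, 0, by simpa using M.zero_mem, by simpa using M.zero_mem⟩
  add_mem' := by
    rintro φ ψ hφ hψ γ
    obtain ⟨n, m, h1, h2⟩ := hφ γ
    obtain ⟨n', m', h1', h2'⟩ := hψ γ
    refine ⟨n + n', m + m', ?_, ?_⟩
    · have h := AddSubmonoid.add_mem _ h1 h1'
      have e : φ γ - n • pairing ℓ γ γ + (ψ γ - n' • pairing ℓ γ γ)
          = (φ + ψ) γ - (n + n') • pairing ℓ γ γ := by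
        rw [AddMonoidHom.add_apply, add_smul]; abel
      rwa [e] at h
    · have h := AddSubmonoid.add_mem _ h2 h2'
      have e : m • pairing ℓ γ γ - φ γ + (m' • pairing ℓ γ γ - ψ γ)
          = (m + m') • pairing ℓ γ γ - (φ + ψ) γ := by
        rw [AddMonoidHom.add_apply, add_smul]; abel
      rwa [e] at h
  neg_mem' := by
    rintro φ hφ γ
    obtain ⟨n, m, h1, h2⟩ := hφ γ
    refine ⟨-m, -n, ?_, ?_⟩
    · have e : m • pairing ℓ γ γ - φ γ = (-φ) γ - (-m) • pairing ℓ γ γ := by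
        rw [AddMonoidHom.neg_apply, neg_smul]; abel
      rwa [e] at h2
    · have e : φ γ - n • pairing ℓ γ γ = (-n) • pairing ℓ γ γ - (-φ) γ := by
        rw [AddMonoidHom.neg_apply, neg_smul]; abel
      rwa [e] at h1

/-- The subgroup of `Hom(H₁,G)†` of homomorphisms of the form `⟨γ, −⟩`. -/
noncomputable def periods (s t : E → V) (M : AddSubmonoid G) (ℓ : E → G) :
    AddSubgroup ↥(BMHom s t M ℓ) :=
  AddSubgroup.comap (BMHom s t M ℓ).subtype (periodMap s t ℓ).range

/-- The tropical Jacobian `TroPic⁰ = Hom(H₁,G)† / {⟨γ,−⟩ : γ ∈ H₁}`. -/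
noncomputable abbrev TroPic0 (s t : E → V) (M : AddSubmonoid G) (ℓ : E → G) :=
  ↥(BMHom s t M ℓ) ⧸ periods s t M ℓ

/-- The standard hypotheses on a tropical curve datum: `M` is a sharp, saturated,
generating submonoid of `G`, and all edge lengths lie in `M` and are nonzero. -/
def IsTropicalCurveDatum (s t : E → V) (M : AddSubmonoid G) (ℓ : E → G) : Prop :=
  (∀ g ∈ M, -g ∈ M → g = 0) ∧
  (∀ (g : G) (n : ℕ), 1 ≤ n → (n : ℤ) • g ∈ M → g ∈ M) ∧
  (∀ g : G, ∃ a ∈ M, ∃ b ∈ M, g = a - b) ∧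
  (∀ e, ℓ e ∈ M) ∧
  (∀ e, ℓ e ≠ 0)

/-- The support of a cycle: the set of edges on which it is nonzero. -/
def support (γ : E → ℤ) : Set E := {e | γ e ≠ 0}

/-- A circuit: a nonzero element of `H₁` such that no nonzero element of `H₁` has support
strictly contained in its support. -/
def IsCircuit (s t : E → V) (γ : H1 s t) : Prop :=
  (γ : E → ℤ) ≠ 0 ∧
    ∀ γ' : H1 s t, (γ' : E → ℤ) ≠ 0 →
      ¬ support (γ' : E → ℤ) ⊂ support (γ : E → ℤ)

/-- A face of `M`: a submonoid `F ≤ M` such that `a + b ∈ F` with `a, b ∈ M` forces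
`a ∈ F`. -/
def IsFace {G : Type*} [AddCommGroup G] (M F : AddSubmonoid G) : Prop :=
  F ≤ M ∧ ∀ a ∈ M, ∀ b ∈ M, a + b ∈ F → a ∈ F

/-- An extreme ray of `M`: a nonzero face any two nonzero elements of which are
commensurable. -/
def IsExtremeRay {G : Type*} [AddCommGroup G] (M F : AddSubmonoid G) : Prop :=
  IsFace M F ∧ F ≠ ⊥ ∧
    ∀ a ∈ F, a ≠ 0 → ∀ b ∈ F, b ≠ 0 → ∃ n m : ℕ, 1 ≤ n ∧ 1 ≤ m ∧ n • a = m • b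

/-- Connectedness of the graph: the equivalence relation generated by `s e ∼ t e` has a
single class. -/
def GraphConnected (s t : E → V) : Prop :=
  ∀ v w : V, Relation.EqvGen (fun a b => ∃ e, s e = a ∧ t e = b) v w

/-- A tropical curve datum is log aligned if on each circuit, all edge lengths lie on a
single extreme ray of `M`. -/
def IsLogAligned {V E : Type*} [Fintype E] {G : Type*} [AddCommGroup G]
    (s t : E → V) (M : AddSubmonoid G) (ℓ : E → G) : Prop :=
  ∀ γ : H1 s t, IsCircuit s t γ →
    ∃ F : AddSubmonoid G, IsExtremeRay M F ∧
      ∀ e, (γ : E → ℤ) e ≠ 0 → ℓ e ∈ F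

/-! ### Auxiliary development for the proof -/

section Aux

open Finset

variable {V E : Type*} [Fintype E] {G : Type*} [AddCommGroup G]

lemma int_abs_le_mul_self (x : ℤ) : |x| ≤ x * x := by
  rcases abs_cases x with ⟨h1, h2⟩ | ⟨h1, h2⟩ <;> nlinarith

lemma int_coeff_nonneg {u v C : ℤ} (h : |u| ≤ C) : 0 ≤ u * v + C * (v * v) := by
  have h2 : |v| ≤ v * v := int_abs_le_mul_self v
  have h4 : |u| * |v| ≤ C * (v * v) :=
    mul_le_mul h h2 (abs_nonneg v) (le_trans (abs_nonneg u) h)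
  have h5 : -(u * v) ≤ |u * v| := neg_le_abs _
  rw [abs_mul] at h5
  linarith

variable (M : AddSubmonoid G)

lemma zsmul_mem_of_nonneg {a : G} (ha : a ∈ M) {n : ℤ} (hn : 0 ≤ n) : n • a ∈ M := by
  obtain ⟨m, rfl⟩ := Int.eq_ofNat_of_zero_le hn
  rw [natCast_zsmul]
  exact nsmul_mem ha m

lemma sharp_sum_zero (hsharp : ∀ g ∈ M, -g ∈ M → g = 0)
    {α : Type*} (f : α → G) :
    ∀ s : Finset α, (∀ a ∈ s, f a ∈ M) → ∑ a ∈ s, f a = 0 → ∀ a ∈ s, f a = 0 := by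
  classical
  intro s
  induction s using Finset.induction_on with
  | empty => intro _ _ a ha; exact absurd ha (by simp)
  | @insert a s ha ih =>
    intro hf h0
    have hfa : f a ∈ M := hf a (mem_insert_self _ _)
    have hrest : ∑ x ∈ s, f x ∈ M :=
      AddSubmonoid.sum_mem _ fun x hx => hf x (mem_insert_of_mem hx)
    rw [Finset.sum_insert ha] at h0
    have h2 : ∑ x ∈ s, f x = -f a := by
      rw [eq_neg_iff_add_eq_zero, add_comm]; exact h0
    have hfa0 : f a = 0 := hsharp _ hfa (h2 ▸ hrest)
    have hsum0 : ∑ x ∈ s, f x = 0 := by rw [h2, hfa0, neg_zero]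
    intro b hb
    rcases Finset.mem_insert.mp hb with rfl | hb
    · exact hfa0
    · exact ih (fun x hx => hf x (mem_insert_of_mem hx)) hsum0 b hb

lemma tf_of_datum (hsharp : ∀ g ∈ M, -g ∈ M → g = 0)
    (hsat : ∀ (g : G) (n : ℕ), 1 ≤ n → (n : ℤ) • g ∈ M → g ∈ M) :
    ∀ (n : ℤ) (g : G), n ≠ 0 → n • g = 0 → g = 0 := by
  have key : ∀ (n : ℕ) (g : G), 1 ≤ n → (n : ℤ) • g = 0 → g = 0 := by
    intro n g hn h
    have h1 : g ∈ M := hsat g n hn (h ▸ M.zero_mem)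
    have h2 : -g ∈ M := hsat (-g) n hn (by rw [smul_neg, h, neg_zero]; exact M.zero_mem)
    exact hsharp g h1 h2
  intro n g hn h
  rcases lt_or_gt_of_ne hn with h' | h'
  · exact key (-n).toNat g (by omega)
      (by rw [Int.toNat_of_nonneg (by omega), neg_smul, h, neg_zero])
  · exact key n.toNat g (by omega) (by rw [Int.toNat_of_nonneg (by omega)]; exact h)

lemma zsmul_cancel (hTF : ∀ (n : ℤ) (g : G), n ≠ 0 → n • g = 0 → g = 0)
    {n : ℤ} (hn : n ≠ 0) {x y : G} (h : n • x = n • y) : x = y := by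
  have := hTF n (x - y) hn (by rw [smul_sub, h, sub_self])
  exact sub_eq_zero.mp this

lemma commensurable_of_zsmul_eq (hsharp : ∀ g ∈ M, -g ∈ M → g = 0)
    (hTF : ∀ (n : ℤ) (g : G), n ≠ 0 → n • g = 0 → g = 0)
    {a b : G} (ha : a ∈ M) (hb : b ∈ M) (ha0 : a ≠ 0) (hb0 : b ≠ 0)
    {p q : ℤ} (hp : p ≠ 0) (hq : q ≠ 0) (h : p • a = q • b) :
    ∃ n m : ℕ, 1 ≤ n ∧ 1 ≤ m ∧ n • a = m • b := by
  have hpos : ∀ p' q' : ℤ, 0 < p' → 0 < q' → p' • a = q' • b →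
      ∃ n m : ℕ, 1 ≤ n ∧ 1 ≤ m ∧ n • a = m • b := by
    intro p' q' hp' hq' h'
    refine ⟨p'.toNat, q'.toNat, by omega, by omega, ?_⟩
    rw [← natCast_zsmul, ← natCast_zsmul, Int.toNat_of_nonneg hp'.le,
      Int.toNat_of_nonneg hq'.le]
    exact h'
  have hmixed : ∀ (x y : G), x ∈ M → y ∈ M → x ≠ 0 → ∀ p' q' : ℤ,
      0 < p' → q' ≤ 0 → p' • x = q' • y → False := by
    intro x y hx hy hx0 p' q' hp' hq' h'
    have h1 : p' • x ∈ M := zsmul_mem_of_nonneg M hx hp'.le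
    have h2 : -(p' • x) ∈ M := by
      rw [h', ← neg_smul]
      exact zsmul_mem_of_nonneg M hy (by omega)
    exact hx0 (hTF p' x hp'.ne' (hsharp _ h1 h2))
  rcases lt_or_gt_of_ne hp with hp' | hp'
  · rcases lt_or_gt_of_ne hq with hq' | hq'
    · exact hpos (-p) (-q) (by omega) (by omega) (by rw [neg_smul, neg_smul, h])
    · exact absurd (hmixed b a hb ha hb0 q p hq' hp'.le h.symm) not_false
  · rcases lt_or_gt_of_ne hq with hq' | hq'
    · exact absurd (hmixed a b ha hb ha0 p q hp' hq'.le h) not_false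
    · exact hpos p q hp' hq' h

/-- The smallest face of `M` containing `x`. -/
def faceOf (x : G) (hx : x ∈ M) : AddSubmonoid G where
  carrier := {a | a ∈ M ∧ ∃ b ∈ M, ∃ n : ℕ, a + b = (n + 1) • x}
  zero_mem' := ⟨M.zero_mem, x, hx, 0, by simp⟩
  add_mem' := by
    rintro a a' ⟨haM, b, hbM, n, hab⟩ ⟨haM', b', hbM', n', hab'⟩
    refine ⟨M.add_mem haM haM', b + b', M.add_mem hbM hbM', n + n' + 1, ?_⟩
    have h : a + a' + (b + b') = (a + b) + (a' + b') := by abel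
    rw [h, hab, hab', ← add_nsmul]
    congr 1
    omega

lemma faceOf_le {x : G} {hx : x ∈ M} {a : G} (ha : a ∈ faceOf M x hx) : a ∈ M := ha.1

lemma mem_faceOf_self {x : G} (hx : x ∈ M) : x ∈ faceOf M x hx :=
  ⟨hx, x, hx, 1, by rw [add_nsmul, one_nsmul]⟩

lemma isFace_faceOf {x : G} (hx : x ∈ M) : IsFace M (faceOf M x hx) := by
  refine ⟨fun a h => h.1, ?_⟩
  rintro a haM b hbM ⟨_, c, hcM, n, habc⟩
  exact ⟨haM, b + c, M.add_mem hbM hcM, n, by rw [← habc]; abel⟩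

lemma face_mem_right {F : AddSubmonoid G} (hF : IsFace M F)
    {a b : G} (ha : a ∈ M) (hb : b ∈ M) (h : a + b ∈ F) : b ∈ F :=
  hF.2 b hb a ha (by rwa [add_comm])

lemma face_sum {F : AddSubmonoid G} (hF : IsFace M F) {α : Type*} (f : α → G) :
    ∀ s : Finset α, (∀ a ∈ s, f a ∈ M) → (∑ a ∈ s, f a) ∈ F → ∀ a ∈ s, f a ∈ F := by
  classical
  intro s
  induction s using Finset.induction_on with
  | empty => intro _ _ a ha; exact absurd ha (by simp)
  | @insert a s ha ih =>
    intro hf hsum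
    rw [Finset.sum_insert ha] at hsum
    have hfa : f a ∈ M := hf a (mem_insert_self _ _)
    have hrest : ∑ x ∈ s, f x ∈ M :=
      AddSubmonoid.sum_mem _ fun x hx => hf x (mem_insert_of_mem hx)
    have h1 : f a ∈ F := hF.2 _ hfa _ hrest hsum
    have h2 : ∑ x ∈ s, f x ∈ F := face_mem_right M hF hfa hrest hsum
    intro b hb
    rcases Finset.mem_insert.mp hb with rfl | hb
    · exact h1
    · exact ih (fun x hx => hf x (mem_insert_of_mem hx)) h2 b hb

lemma face_divide {F : AddSubmonoid G} (hF : IsFace M F)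
    {x : G} (hx : x ∈ M) {c : ℤ} (hc : 1 ≤ c) (h : c • x ∈ F) : x ∈ F := by
  refine hF.2 x hx ((c - 1) • x) (zsmul_mem_of_nonneg M hx (by omega)) ?_
  have he : x + (c - 1) • x = c • x := by
    calc x + (c - 1) • x = (1 + (c - 1)) • x := by rw [add_smul, one_smul]
    _ = c • x := by congr 1; ring
  rwa [he]

end Aux

section Pairing

open Finset

variable {V E : Type*} [Fintype E] {G : Type*} [AddCommGroup G]
variable (s t : E → V) (M : AddSubmonoid G) (ℓ : E → G)

lemma pairing_comm (γ γ' : E → ℤ) : pairing ℓ γ γ' = pairing ℓ γ' γ :=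
  Finset.sum_congr rfl fun e _ => by rw [mul_comm]

lemma pairing_zero_left (γ : E → ℤ) : pairing ℓ (0 : E → ℤ) γ = 0 := by
  simp [pairing]

lemma pairing_self_mem (hℓM : ∀ e, ℓ e ∈ M) (γ : E → ℤ) : pairing ℓ γ γ ∈ M :=
  AddSubmonoid.sum_mem _ fun e _ => zsmul_mem_of_nonneg M (hℓM e) (mul_self_nonneg _)

lemma eq_zero_of_sq_pairing_zero (hsharp : ∀ g ∈ M, -g ∈ M → g = 0)
    (hTF : ∀ (n : ℤ) (g : G), n ≠ 0 → n • g = 0 → g = 0)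
    (hℓM : ∀ e, ℓ e ∈ M) (hℓ0 : ∀ e, ℓ e ≠ 0)
    (γ : E → ℤ) (h : ∑ e, (γ e * γ e) • ℓ e = 0) : ∀ e, γ e = 0 := by
  intro e
  have h2 := sharp_sum_zero M hsharp (fun e => (γ e * γ e) • ℓ e) Finset.univ
    (fun e _ => zsmul_mem_of_nonneg M (hℓM e) (mul_self_nonneg _)) h e (mem_univ e)
  by_contra he
  exact hℓ0 e (hTF (γ e * γ e) (ℓ e) (mul_ne_zero he he) h2)

lemma pairing_self_eq_zero (hsharp : ∀ g ∈ M, -g ∈ M → g = 0)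
    (hTF : ∀ (n : ℤ) (g : G), n ≠ 0 → n • g = 0 → g = 0)
    (hℓM : ∀ e, ℓ e ∈ M) (hℓ0 : ∀ e, ℓ e ≠ 0)
    (γ : E → ℤ) (h : pairing ℓ γ γ = 0) : γ = 0 :=
  funext fun e => eq_zero_of_sq_pairing_zero M ℓ hsharp hTF hℓM hℓ0 γ h e

end Pairing

section Homs

open Finset

variable {V E : Type*} [Fintype E] {G : Type*} [AddCommGroup G]
variable (s t : E → V) (M : AddSubmonoid G) (ℓ : E → G)

/-- The homomorphism `γ' ↦ γ'(e₀) • a`. -/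
noncomputable def evalHom (e₀ : E) (a : G) : ↥(H1 s t) →+ G :=
  AddMonoidHom.mk' (fun γ' => ((γ' : E → ℤ) e₀) • a) (by
    intro x y
    simp only [AddSubgroup.coe_add, Pi.add_apply, add_smul])

@[simp] lemma evalHom_apply (e₀ : E) (a : G) (γ' : ↥(H1 s t)) :
    evalHom s t e₀ a γ' = ((γ' : E → ℤ) e₀) • a := rfl

/-- The partial period homomorphism `γ' ↦ ∑_{e ∈ S} (d e * γ' e) • ℓ e`. -/
noncomputable def partialHom (d : E → ℤ) (S : Finset E) : ↥(H1 s t) →+ G :=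
  AddMonoidHom.mk' (fun γ' => ∑ e ∈ S, (d e * (γ' : E → ℤ) e) • ℓ e) (by
    intro x y
    rw [← Finset.sum_add_distrib]
    refine Finset.sum_congr rfl fun e _ => ?_
    simp only [AddSubgroup.coe_add, Pi.add_apply, mul_add, add_smul])

@[simp] lemma partialHom_apply (d : E → ℤ) (S : Finset E) (γ' : ↥(H1 s t)) :
    partialHom s t ℓ d S γ' = ∑ e ∈ S, (d e * (γ' : E → ℤ) e) • ℓ e := rfl

lemma partialHom_apply' (d : E → ℤ) (S : Finset E) [DecidablePred (· ∈ S)]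
    (γ' : ↥(H1 s t)) :
    partialHom s t ℓ d S γ'
      = ∑ e, (if e ∈ S then d e * (γ' : E → ℤ) e else 0) • ℓ e := by
  rw [partialHom_apply]
  rw [← Finset.sum_subset (Finset.subset_univ S)
    (fun x _ hx => by rw [if_neg hx, zero_smul])]
  exact Finset.sum_congr rfl fun e he => by rw [if_pos he]

lemma pairing_sub_abs_mem (hℓM : ∀ e, ℓ e ∈ M) (γ : E → ℤ) (e₀ : E) :
    pairing ℓ γ γ - |γ e₀| • ℓ e₀ ∈ M := by
  classical
  have h : pairing ℓ γ γ - |γ e₀| • ℓ e₀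
      = ((γ e₀ * γ e₀ - |γ e₀|) • ℓ e₀) + ∑ e ∈ univ.erase e₀, (γ e * γ e) • ℓ e := by
    unfold pairing
    rw [← Finset.add_sum_erase _ _ (mem_univ e₀), sub_smul]
    abel
  rw [h]
  exact M.add_mem
    (zsmul_mem_of_nonneg M (hℓM e₀) (by nlinarith [int_abs_le_mul_self (γ e₀)]))
    (AddSubmonoid.sum_mem _ fun e _ => zsmul_mem_of_nonneg M (hℓM e) (mul_self_nonneg _))

lemma bounded_evalHom (hℓM : ∀ e, ℓ e ∈ M) (e₀ : E) {a : G}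
    (ha : a ∈ faceOf M (ℓ e₀) (hℓM e₀)) :
    BoundedMonodromy s t M ℓ (evalHom s t e₀ a) := by
  intro γ'
  obtain ⟨haM, b, hbM, nn, hab⟩ := ha
  set c : ℤ := (γ' : E → ℤ) e₀ with hc
  set N : ℤ := (nn : ℤ) + 1 with hN
  have habZ : a + b = N • ℓ e₀ := by
    rw [hab, hN, ← natCast_zsmul]
    push_cast
    ring_nf
  have hNpos : 0 < N := by omega
  set z : G := pairing ℓ (γ' : E → ℤ) (γ' : E → ℤ) with hz
  have hw : z - |c| • ℓ e₀ ∈ M := pairing_sub_abs_mem M ℓ hℓM _ e₀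
  have h1 : (|c| * N) • (|c| • ℓ e₀) = (c * c) • (N • ℓ e₀) := by
    rw [smul_smul, smul_smul, mul_right_comm, abs_mul_abs_self]
  rw [← habZ] at h1
  refine ⟨-(|c| * N), |c| * N, ?_, ?_⟩
  · have key : c • a + (|c| * N) • z
        = ((c * c + c) • a + (c * c) • b) + (|c| * N) • (z - |c| • ℓ e₀) := by
      rw [smul_sub, h1, smul_add, add_smul]
      abel
    have : evalHom s t e₀ a γ' - -(|c| * N) • z = c • a + (|c| * N) • z := by
      rw [evalHom_apply, ← hc, neg_smul, sub_neg_eq_add]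
    rw [this, key]
    exact M.add_mem
      (M.add_mem (zsmul_mem_of_nonneg M haM (by nlinarith [int_abs_le_mul_self c, neg_abs_le c]))
        (zsmul_mem_of_nonneg M hbM (mul_self_nonneg c)))
      (zsmul_mem_of_nonneg M hw (mul_nonneg (abs_nonneg c) hNpos.le))
  · have key : (|c| * N) • z - c • a
        = ((c * c - c) • a + (c * c) • b) + (|c| * N) • (z - |c| • ℓ e₀) := by
      rw [smul_sub, h1, smul_add, sub_smul]
      abel
    have : (|c| * N) • z - evalHom s t e₀ a γ' = (|c| * N) • z - c • a := by
      rw [evalHom_apply, ← hc]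
    rw [this, key]
    exact M.add_mem
      (M.add_mem (zsmul_mem_of_nonneg M haM (by nlinarith [int_abs_le_mul_self c, le_abs_self c]))
        (zsmul_mem_of_nonneg M hbM (mul_self_nonneg c)))
      (zsmul_mem_of_nonneg M hw (mul_nonneg (abs_nonneg c) hNpos.le))

lemma bounded_partialHom (hℓM : ∀ e, ℓ e ∈ M) (d : E → ℤ) (S : Finset E) :
    BoundedMonodromy s t M ℓ (partialHom s t ℓ d S) := by
  classical
  intro γ'
  set C : ℤ := ∑ e, |d e| with hC
  have hCd : ∀ e, |d e| ≤ C := fun e =>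
    Finset.single_le_sum (f := fun e => |d e|) (fun i _ => abs_nonneg _) (mem_univ e)
  have happ := partialHom_apply' s t ℓ d S γ'
  set g : E → ℤ := fun e => (γ' : E → ℤ) e with hg
  have hCz : ∀ u : ℤ, u • pairing ℓ g g = ∑ e, (u * (g e * g e)) • ℓ e := by
    intro u
    unfold pairing
    rw [Finset.smul_sum]
    exact Finset.sum_congr rfl fun e _ => by rw [smul_smul]
  refine ⟨-C, C, ?_, ?_⟩
  · have key : partialHom s t ℓ d S γ' - (-C) • pairing ℓ g g
        = ∑ e, ((if e ∈ S then d e * g e else 0) + C * (g e * g e)) • ℓ e := by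
      rw [neg_smul, sub_neg_eq_add, happ, hCz C, ← Finset.sum_add_distrib]
      exact Finset.sum_congr rfl fun e _ => by rw [add_smul]
    rw [key]
    refine AddSubmonoid.sum_mem _ fun e _ => zsmul_mem_of_nonneg M (hℓM e) ?_
    by_cases he : e ∈ S
    · rw [if_pos he]; exact int_coeff_nonneg (hCd e)
    · rw [if_neg he, zero_add]
      exact mul_nonneg (Finset.sum_nonneg fun i _ => abs_nonneg _) (mul_self_nonneg _)
  · have key : C • pairing ℓ g g - partialHom s t ℓ d S γ'
        = ∑ e, ((-(if e ∈ S then d e * g e else 0)) + C * (g e * g e)) • ℓ e := by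
      rw [happ, hCz C, ← Finset.sum_sub_distrib]
      exact Finset.sum_congr rfl fun e _ => by rw [add_smul, neg_smul]; abel
    rw [key]
    refine AddSubmonoid.sum_mem _ fun e _ => zsmul_mem_of_nonneg M (hℓM e) ?_
    by_cases he : e ∈ S
    · rw [if_pos he]
      have : -(d e * g e) = (-(d e)) * g e := by ring
      rw [this]
      exact int_coeff_nonneg (by rw [abs_neg]; exact hCd e)
    · rw [if_neg he, neg_zero, zero_add]
      exact mul_nonneg (Finset.sum_nonneg fun i _ => abs_nonneg _) (mul_self_nonneg _)

lemma exists_period_of_finite (hfin : Finite (TroPic0 s t M ℓ))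
    (φ : ↥(H1 s t) →+ G) (hφ : BoundedMonodromy s t M ℓ φ) :
    ∃ (k : ℕ) (η : ↥(H1 s t)), 0 < k ∧
      ∀ γ' : ↥(H1 s t), (k : ℤ) • φ γ' = pairing ℓ (η : E → ℤ) (γ' : E → ℤ) := by
  set x : ↥(BMHom s t M ℓ) := ⟨φ, hφ⟩ with hx
  set q : TroPic0 s t M ℓ := QuotientAddGroup.mk x with hq
  obtain ⟨k, hk, hkq⟩ := (isOfFinAddOrder_of_finite q).exists_nsmul_eq_zero
  have h1 : k • x ∈ periods s t M ℓ := by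
    rw [← QuotientAddGroup.eq_zero_iff]
    rw [hq] at hkq
    rw [← hkq]
    rfl
  rw [periods, AddSubgroup.mem_comap, AddMonoidHom.mem_range] at h1
  obtain ⟨η, hη⟩ := h1
  refine ⟨k, η, hk, fun γ' => ?_⟩
  have h2 := DFunLike.congr_fun hη γ'
  have h3 : periodMap s t ℓ η γ' = pairing ℓ (η : E → ℤ) (γ' : E → ℤ) := rfl
  rw [h3] at h2
  rw [h2]
  have h4 : ((BMHom s t M ℓ).subtype (k • x)) γ' = k • (φ γ') := rfl
  rw [h4, natCast_zsmul]

end Homs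

section Forward

open Finset

variable {V E : Type*} [Fintype E] {G : Type*} [AddCommGroup G]
variable (s t : E → V) (M : AddSubmonoid G) (ℓ : E → G)

lemma caseA (hsharp : ∀ g ∈ M, -g ∈ M → g = 0)
    (hTF : ∀ (n : ℤ) (g : G), n ≠ 0 → n • g = 0 → g = 0)
    (hℓM : ∀ e, ℓ e ∈ M) (hℓ0 : ∀ e, ℓ e ≠ 0)
    (hfin : Finite (TroPic0 s t M ℓ))
    (δ : ↥(H1 s t)) (e₀ : E) (he₀ : (δ : E → ℤ) e₀ ≠ 0) :
    ∀ a ∈ faceOf M (ℓ e₀) (hℓM e₀), a ≠ 0 → ∀ a' ∈ faceOf M (ℓ e₀) (hℓM e₀), a' ≠ 0 →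
      ∃ n m : ℕ, 1 ≤ n ∧ 1 ≤ m ∧ n • a = m • a' := by
  intro a ha ha0 a' ha' ha0'
  obtain ⟨k, η, hk, Hη⟩ := exists_period_of_finite s t M ℓ hfin _
    (bounded_evalHom s t M ℓ hℓM e₀ ha)
  obtain ⟨k', η', hk', Hη'⟩ := exists_period_of_finite s t M ℓ hfin _
    (bounded_evalHom s t M ℓ hℓM e₀ ha')
  have hcoord : ∀ (b : G) (kk : ℕ) (θ : ↥(H1 s t)),
      (∀ γ' : ↥(H1 s t), (kk : ℤ) • (evalHom s t e₀ b γ')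
        = pairing ℓ (θ : E → ℤ) (γ' : E → ℤ)) →
      0 < kk → b ≠ 0 → (θ : E → ℤ) e₀ ≠ 0 := by
    intro b kk θ H hkk hb0 h0
    have h1 := H θ
    rw [evalHom_apply, h0, zero_smul, smul_zero] at h1
    have h2 : (θ : E → ℤ) = 0 := pairing_self_eq_zero M ℓ hsharp hTF hℓM hℓ0 _ h1.symm
    have h3 := H δ
    rw [evalHom_apply, h2, pairing_zero_left, smul_smul] at h3
    exact hb0 (hTF _ _ (mul_ne_zero (by exact_mod_cast hkk.ne') he₀) h3)
  have hη0 := hcoord a k η Hη hk ha0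
  have hη'0 := hcoord a' k' η' Hη' hk' ha0'
  have h4 := Hη η'
  have h5 := Hη' η
  rw [evalHom_apply] at h4 h5
  rw [pairing_comm] at h5
  have h6 : ((k : ℤ) * (η' : E → ℤ) e₀) • a = ((k' : ℤ) * (η : E → ℤ) e₀) • a' := by
    rw [mul_smul, mul_smul, h4, h5]
  exact commensurable_of_zsmul_eq M hsharp hTF (faceOf_le M ha) (faceOf_le M ha') ha0 ha0'
    (mul_ne_zero (by exact_mod_cast hk.ne') hη'0)
    (mul_ne_zero (by exact_mod_cast hk'.ne') hη0) h6

lemma caseB (hsharp : ∀ g ∈ M, -g ∈ M → g = 0)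
    (hTF : ∀ (n : ℤ) (g : G), n ≠ 0 → n • g = 0 → g = 0)
    (hℓM : ∀ e, ℓ e ∈ M) (hℓ0 : ∀ e, ℓ e ≠ 0)
    (hfin : Finite (TroPic0 s t M ℓ))
    (δ : ↥(H1 s t)) (hδ : IsCircuit s t δ) (e₁ : E) (he₁ : (δ : E → ℤ) e₁ ≠ 0) :
    ∀ e, (δ : E → ℤ) e ≠ 0 → ℓ e ∈ faceOf M (ℓ e₁) (hℓM e₁) := by
  classical
  by_contra hcon
  push_neg at hcon
  obtain ⟨e₂, he₂δ, he₂R⟩ := hcon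
  set R := faceOf M (ℓ e₁) (hℓM e₁) with hRdef
  set S : Finset E := Finset.univ.filter (fun e => (δ : E → ℤ) e ≠ 0 ∧ ℓ e ∈ R) with hS
  have hmemS : ∀ e, e ∈ S ↔ ((δ : E → ℤ) e ≠ 0 ∧ ℓ e ∈ R) := by
    intro e; simp [hS]
  have he₁S : e₁ ∈ S := (hmemS e₁).mpr ⟨he₁, mem_faceOf_self M (hℓM e₁)⟩
  have he₂S : e₂ ∉ S := fun h => he₂R ((hmemS e₂).mp h).2
  obtain ⟨k, η, hk, Hη⟩ := exists_period_of_finite s t M ℓ hfin _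
    (bounded_partialHom s t M ℓ hℓM (δ : E → ℤ) S)
  have Hη' : ∀ γ' : ↥(H1 s t),
      ∑ e, (if e ∈ S then (k : ℤ) * ((δ : E → ℤ) e * (γ' : E → ℤ) e) else 0) • ℓ e
        = ∑ e, ((η : E → ℤ) e * (γ' : E → ℤ) e) • ℓ e := by
    intro γ'
    have h1 := Hη γ'
    rw [partialHom_apply' s t ℓ (δ : E → ℤ) S γ', Finset.smul_sum] at h1
    have h2 : ∀ e : E, (if e ∈ S then (k : ℤ) * ((δ : E → ℤ) e * (γ' : E → ℤ) e) else 0) • ℓ e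
        = (k : ℤ) • ((if e ∈ S then (δ : E → ℤ) e * (γ' : E → ℤ) e else 0) • ℓ e) := by
      intro e
      by_cases he : e ∈ S
      · rw [if_pos he, if_pos he, smul_smul]
      · rw [if_neg he, if_neg he, zero_smul, smul_zero]
    rw [Finset.sum_congr rfl fun e _ => h2 e, h1]
    rfl
  have hi : ∀ e, ℓ e ∉ R → (η : E → ℤ) e = 0 := by
    intro e0 he0R
    by_contra hne
    have he0S : e0 ∉ S := fun h => he0R ((hmemS e0).mp h).2
    set u : E → ℤ := fun e =>
      (if e ∈ S then (k : ℤ) * ((δ : E → ℤ) e * (η : E → ℤ) e) else 0)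
        - (η : E → ℤ) e * (η : E → ℤ) e with hu
    have h2 : ∑ e, u e • ℓ e = 0 := by
      have h3 : ∀ e : E, u e • ℓ e
          = (if e ∈ S then (k : ℤ) * ((δ : E → ℤ) e * (η : E → ℤ) e) else 0) • ℓ e
            - ((η : E → ℤ) e * (η : E → ℤ) e) • ℓ e := by
        intro e; rw [hu, sub_smul]
      rw [Finset.sum_congr rfl fun e _ => h3 e, Finset.sum_sub_distrib, Hη' η, sub_self]
    have h3 : ∑ e, ((u e).toNat) • ℓ e = ∑ e, ((-(u e)).toNat) • ℓ e := by
      have h4 : ∀ e : E, u e • ℓ e = ((u e).toNat) • ℓ e - ((-(u e)).toNat) • ℓ e := by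
        intro e
        rw [← natCast_zsmul, ← natCast_zsmul, ← sub_smul, Int.toNat_sub_toNat_neg]
      rw [Finset.sum_congr rfl fun e _ => h4 e, Finset.sum_sub_distrib] at h2
      exact sub_eq_zero.mp h2
    have hAR : ∑ e, ((u e).toNat) • ℓ e ∈ R := by
      refine AddSubmonoid.sum_mem _ fun e _ => ?_
      by_cases heS : e ∈ S
      · exact nsmul_mem ((hmemS e).mp heS).2 _
      · have hue : u e = -((η : E → ℤ) e * (η : E → ℤ) e) := by simp [hu, heS]
        have h5 : (u e).toNat = 0 :=
          Int.toNat_of_nonpos (by rw [hue]; exact neg_nonpos.mpr (mul_self_nonneg _))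
        rw [h5, zero_nsmul]
        exact R.zero_mem
    have hBR : ∑ e, ((-(u e)).toNat) • ℓ e ∈ R := by rw [← h3]; exact hAR
    have hterm : ((-(u e0)).toNat) • ℓ e0 ∈ R :=
      face_sum M (isFace_faceOf M (hℓM e₁)) _ univ
        (fun e _ => nsmul_mem (hℓM e) _) hBR e0 (mem_univ e0)
    have h5 : -(u e0) = (η : E → ℤ) e0 * (η : E → ℤ) e0 := by simp [hu, he0S]
    have h6 : 1 ≤ -(u e0) := by
      rw [h5]
      calc (1 : ℤ) ≤ |(η : E → ℤ) e0| := Int.one_le_abs hne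
      _ ≤ _ := int_abs_le_mul_self _
    refine he0R (face_divide M (isFace_faceOf M (hℓM e₁)) (hℓM e0)
      (c := (((-(u e0)).toNat : ℤ))) (by omega) ?_)
    rw [natCast_zsmul]
    exact hterm
  set η₂ : E → ℤ := fun e => if e ∈ S then (k : ℤ) * (δ : E → ℤ) e else 0 with hη₂
  have hσ : ∀ γ' : ↥(H1 s t),
      ∑ e, ((η₂ e - (η : E → ℤ) e) * (γ' : E → ℤ) e) • ℓ e = 0 := by
    intro γ'
    have h2 : ∀ e : E, ((η₂ e - (η : E → ℤ) e) * (γ' : E → ℤ) e) • ℓ e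
        = (if e ∈ S then (k : ℤ) * ((δ : E → ℤ) e * (γ' : E → ℤ) e) else 0) • ℓ e
          - ((η : E → ℤ) e * (γ' : E → ℤ) e) • ℓ e := by
      intro e
      rw [← sub_smul]
      congr 1
      by_cases heS : e ∈ S
      · simp only [hη₂, if_pos heS]; ring
      · simp only [hη₂, if_neg heS]; ring
    rw [Finset.sum_congr rfl fun e _ => h2 e, Finset.sum_sub_distrib, Hη' γ', sub_self]
  set ρ : ↥(H1 s t) := (k : ℤ) • δ - η with hρdef
  have hρ : ∀ e, (ρ : E → ℤ) e = (k : ℤ) * (δ : E → ℤ) e - (η : E → ℤ) e := by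
    intro e
    rw [hρdef]
    simp [AddSubgroup.coe_sub, Pi.sub_apply, smul_eq_mul]
  have hkey : ∀ e, ((η₂ e - (η : E → ℤ) e) * (ρ : E → ℤ) e)
      = ((η₂ e - (η : E → ℤ) e) * (η₂ e - (η : E → ℤ) e)) := by
    intro e
    rw [hρ e]
    by_cases heS : e ∈ S
    · simp only [hη₂, if_pos heS]
    · by_cases heδ : (δ : E → ℤ) e = 0
      · simp only [hη₂, if_neg heS, heδ, mul_zero, zero_sub]
      · have hℓe : ℓ e ∉ R := fun h => heS ((hmemS e).mpr ⟨heδ, h⟩)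
        have h0 : (η : E → ℤ) e = 0 := hi e hℓe
        simp only [hη₂, if_neg heS, h0, zero_sub, neg_zero, zero_mul]
  have h0 := hσ ρ
  rw [Finset.sum_congr rfl fun e _ => by rw [hkey e]] at h0
  have hσ0 := eq_zero_of_sq_pairing_zero M ℓ hsharp hTF hℓM hℓ0
    (fun e => η₂ e - (η : E → ℤ) e) h0
  have hηeq : ∀ e, (η : E → ℤ) e = η₂ e := fun e => by have := hσ0 e; omega
  have hne : (η : E → ℤ) ≠ 0 := by
    intro h
    have h1 : (η : E → ℤ) e₁ = 0 := by rw [h]; rfl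
    rw [hηeq e₁] at h1
    simp only [hη₂, if_pos he₁S] at h1
    rcases mul_eq_zero.mp h1 with h2 | h2
    · exact absurd h2 (by exact_mod_cast hk.ne')
    · exact he₁ h2
  have hss : support (η : E → ℤ) ⊂ support (δ : E → ℤ) := by
    rw [Set.ssubset_def]
    constructor
    · intro e he
      simp only [support, Set.mem_setOf_eq] at he ⊢
      rw [hηeq e] at he
      by_cases heS : e ∈ S
      · exact ((hmemS e).mp heS).1
      · exact absurd (by simp [hη₂, heS]) he
    · intro hsub
      have h1 : e₂ ∈ support (η : E → ℤ) := hsub he₂δ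
      simp only [support, Set.mem_setOf_eq] at h1
      exact h1 (by rw [hηeq e₂]; simp [hη₂, he₂S])
  exact hδ.2 η hne hss

lemma aligned_of_finite (hdatum : IsTropicalCurveDatum s t M ℓ)
    (hfin : Finite (TroPic0 s t M ℓ)) : IsLogAligned s t M ℓ := by
  obtain ⟨hsharp, hsat, hgen, hℓM, hℓ0⟩ := hdatum
  have hTF := tf_of_datum M hsharp hsat
  intro δ hδ
  obtain ⟨e₁, he₁⟩ : ∃ e, (δ : E → ℤ) e ≠ 0 := by
    by_contra h
    push_neg at h
    exact hδ.1 (funext fun e => h e)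
  refine ⟨faceOf M (ℓ e₁) (hℓM e₁), ⟨isFace_faceOf M (hℓM e₁), ?_, ?_⟩, ?_⟩
  · intro h
    refine hℓ0 e₁ ?_
    have h2 := mem_faceOf_self M (hℓM e₁)
    rw [h] at h2
    exact AddSubmonoid.mem_bot.mp h2
  · intro a ha ha0 b hb hb0
    exact caseA s t M ℓ hsharp hTF hℓM hℓ0 hfin δ e₁ he₁ a ha ha0 b hb hb0
  · intro e he
    exact caseB s t M ℓ hsharp hTF hℓM hℓ0 hfin δ hδ e₁ he₁ e he

end Forward

section Circuits

open Finset

variable {V E : Type*} [Fintype E] {G : Type*} [AddCommGroup G]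
variable (s t : E → V)

open Classical in
/-- The support of an integer vector, as a finset. -/
noncomputable def suppF (γ : E → ℤ) : Finset E := Finset.univ.filter (fun e => γ e ≠ 0)

lemma mem_suppF {γ : E → ℤ} {e : E} : e ∈ suppF γ ↔ γ e ≠ 0 := by
  classical
  simp [suppF]

lemma exists_circuit_subset :
    ∀ (n : ℕ) (γ : ↥(H1 s t)), (suppF (γ : E → ℤ)).card ≤ n → (γ : E → ℤ) ≠ 0 →
      ∃ δ : ↥(H1 s t), IsCircuit s t δ ∧ support (δ : E → ℤ) ⊆ support (γ : E → ℤ) := by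
  intro n
  induction n with
  | zero =>
    intro γ hcard hγ
    exfalso
    obtain ⟨e, he⟩ : ∃ e, (γ : E → ℤ) e ≠ 0 := Function.ne_iff.mp hγ
    have h1 : e ∈ suppF (γ : E → ℤ) := mem_suppF.mpr he
    have h2 := Finset.card_pos.mpr ⟨e, h1⟩
    omega
  | succ n ih =>
    intro γ hcard hγ
    by_cases hc : IsCircuit s t γ
    · exact ⟨γ, hc, subset_rfl⟩
    · rw [IsCircuit] at hc
      push_neg at hc
      obtain ⟨γ', hγ'0, hγ'ss⟩ := hc hγ
      have hsubF : suppF (γ' : E → ℤ) ⊂ suppF (γ : E → ℤ) := by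
        constructor
        · intro e he
          exact mem_suppF.mpr (subset_of_ssubset hγ'ss (mem_suppF.mp he))
        · intro hcon
          obtain ⟨x, hx1, hx2⟩ := Set.exists_of_ssubset hγ'ss
          exact hx2 (mem_suppF.mp (hcon (mem_suppF.mpr hx1)))
      have hlt := Finset.card_lt_card hsubF
      obtain ⟨δ, hδ, hsub⟩ := ih γ' (by omega) hγ'0
      exact ⟨δ, hδ, hsub.trans (subset_of_ssubset hγ'ss)⟩

/-- Coercion `ℤ^E → ℚ^E` as an additive homomorphism. -/
def ratCoe : (E → ℤ) →+ (E → ℚ) :=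
  AddMonoidHom.mk' (fun x e => (x e : ℚ)) (by
    intro x y
    funext e
    simp only [Pi.add_apply]
    push_cast
    rfl)

lemma ratCoe_apply (x : E → ℤ) (e : E) : ratCoe x e = (x e : ℚ) := rfl

lemma ratCoe_injective : Function.Injective (ratCoe (E := E)) := by
  intro x y h
  funext e
  have h2 := congrFun h e
  rw [ratCoe_apply, ratCoe_apply] at h2
  exact_mod_cast h2

/-- The set of (rationalized) circuits. -/
noncomputable def circuitSet : Set (E → ℚ) :=
  {x | ∃ δ : ↥(H1 s t), IsCircuit s t δ ∧ ratCoe (δ : E → ℤ) = x}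

lemma span_circuits :
    ∀ (n : ℕ) (γ : ↥(H1 s t)), (suppF (γ : E → ℤ)).card ≤ n →
      ratCoe (γ : E → ℤ) ∈ Submodule.span ℚ (circuitSet s t) := by
  classical
  intro n
  induction n with
  | zero =>
    intro γ hcard
    have hγ : (γ : E → ℤ) = 0 := by
      by_contra h
      obtain ⟨e, he⟩ : ∃ e, (γ : E → ℤ) e ≠ 0 := Function.ne_iff.mp h
      have h1 : e ∈ suppF (γ : E → ℤ) := mem_suppF.mpr he
      have h2 := Finset.card_pos.mpr ⟨e, h1⟩
      omega
    rw [hγ, map_zero]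
    exact Submodule.zero_mem _
  | succ n ih =>
    intro γ hcard
    by_cases hγ : (γ : E → ℤ) = 0
    · rw [hγ, map_zero]; exact Submodule.zero_mem _
    obtain ⟨δ, hδ, hsub⟩ := exists_circuit_subset s t (n + 1) γ hcard hγ
    obtain ⟨e, he⟩ : ∃ e, (δ : E → ℤ) e ≠ 0 := Function.ne_iff.mp hδ.1
    set γ' : ↥(H1 s t) := ((δ : E → ℤ) e) • γ - ((γ : E → ℤ) e) • δ with hγ'def
    have hγ'app : ∀ f, (γ' : E → ℤ) f
        = (δ : E → ℤ) e * (γ : E → ℤ) f - (γ : E → ℤ) e * (δ : E → ℤ) f := by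
      intro f
      rw [hγ'def]
      simp [AddSubgroup.coe_sub, smul_eq_mul]
    have hsupp : suppF (γ' : E → ℤ) ⊆ (suppF (γ : E → ℤ)).erase e := by
      intro f hf
      rw [mem_suppF, hγ'app f] at hf
      rw [Finset.mem_erase, mem_suppF]
      constructor
      · intro hfe
        rw [hfe] at hf
        exact hf (by ring)
      · by_contra h0
        have hδf : (δ : E → ℤ) f = 0 := by
          by_contra h1
          have h2 := hsub (show f ∈ support (δ : E → ℤ) from h1)
          exact (show (γ : E → ℤ) f ≠ 0 from h2) h0
        exact hf (by rw [h0, hδf]; ring)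
    have hcard' : (suppF (γ' : E → ℤ)).card ≤ n := by
      have h1 := Finset.card_le_card hsupp
      have h2 : e ∈ suppF (γ : E → ℤ) :=
        mem_suppF.mpr (hsub (show e ∈ support (δ : E → ℤ) from he))
      have h3 := Finset.card_erase_of_mem h2
      omega
    have hmem' := ih γ' hcard'
    have hmemδ : ratCoe (δ : E → ℤ) ∈ Submodule.span ℚ (circuitSet s t) :=
      Submodule.subset_span ⟨δ, hδ, rfl⟩
    have h4 : ratCoe (γ' : E → ℤ)
        = ((δ : E → ℤ) e : ℚ) • ratCoe (γ : E → ℤ)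
          - ((γ : E → ℤ) e : ℚ) • ratCoe (δ : E → ℤ) := by
      funext f
      simp only [Pi.sub_apply, Pi.smul_apply, smul_eq_mul, ratCoe_apply, hγ'app f]
      push_cast
      ring
    have hkey : ratCoe (γ : E → ℤ)
        = (((δ : E → ℤ) e : ℚ))⁻¹ • (ratCoe (γ' : E → ℤ)
            + ((γ : E → ℤ) e : ℚ) • ratCoe (δ : E → ℤ)) := by
      rw [h4, sub_add_cancel, inv_smul_smul₀ (by exact_mod_cast he)]
    rw [hkey]
    exact Submodule.smul_mem _ _ (Submodule.add_mem _ hmem' (Submodule.smul_mem _ _ hmemδ))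

lemma span_circuits' (γ : ↥(H1 s t)) :
    ratCoe (γ : E → ℤ) ∈ Submodule.span ℚ (circuitSet s t) :=
  span_circuits s t (suppF (γ : E → ℤ)).card γ le_rfl

lemma rat_clear_denoms {α : Type*} [Fintype α] (x : α → ℚ) :
    ∃ D : ℕ, 0 < D ∧ ∀ a, ∃ z : ℤ, (z : ℚ) = (D : ℚ) * x a := by
  classical
  refine ⟨∏ a, (x a).den, Finset.prod_pos (fun a _ => (x a).den_pos), fun a => ?_⟩
  obtain ⟨c, hc⟩ : (x a).den ∣ ∏ a, (x a).den := Finset.dvd_prod_of_mem _ (mem_univ a)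
  refine ⟨(x a).num * c, ?_⟩
  have hden : ((x a).den : ℚ) ≠ 0 := by
    exact_mod_cast (x a).den_pos.ne'
  have h1 : ((x a).num : ℚ) = x a * (x a).den :=
    (div_eq_iff hden).mp (Rat.num_div_den (x a))
  rw [hc]
  push_cast
  rw [h1]
  ring

end Circuits

section Ray

open Finset

variable {V E : Type*} [Fintype E] {G : Type*} [AddCommGroup G]
variable (M : AddSubmonoid G) (ℓ : E → G)

lemma pairing_self_mem_ray {F : AddSubmonoid G} (γ : E → ℤ)
    (h : ∀ e, γ e ≠ 0 → ℓ e ∈ F) : pairing ℓ γ γ ∈ F := by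
  refine AddSubmonoid.sum_mem _ fun e _ => ?_
  by_cases he : γ e = 0
  · rw [he, zero_mul, zero_smul]
    exact F.zero_mem
  · exact zsmul_mem_of_nonneg F (h e he) (mul_self_nonneg _)

lemma bounded_to_ray (hsharp : ∀ g ∈ M, -g ∈ M → g = 0)
    {F : AddSubmonoid G} (hF : IsExtremeRay M F)
    {z x : G} (hzF : z ∈ F) (hz0 : z ≠ 0) (hb : Bounded M z x) :
    ∃ p q : ℤ, q ≠ 0 ∧ q • x = p • z := by
  obtain ⟨⟨hFle, hFface⟩, hFbot, hFcomm⟩ := hF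
  obtain ⟨n, m, h1, h2⟩ := hb
  have hsum : (x - n • z) + (m • z - x) = (m - n) • z := by
    rw [sub_smul]; abel
  by_cases hmn : m - n ≤ 0
  · have hmem : -((x - n • z) + (m • z - x)) ∈ M := by
      rw [hsum, ← neg_smul]
      exact zsmul_mem_of_nonneg M (hFle hzF) (by omega)
    have h3 : (x - n • z) + (m • z - x) = 0 := hsharp _ (M.add_mem h1 h2) hmem
    have hBA : m • z - x = -(x - n • z) := by
      rw [eq_neg_iff_add_eq_zero, add_comm]
      exact h3
    rw [hBA] at h2
    have h4 : x - n • z = 0 := hsharp _ h1 h2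
    exact ⟨n, 1, one_ne_zero, by rw [one_smul, sub_eq_zero.mp h4]⟩
  · have hABF : (x - n • z) + (m • z - x) ∈ F := by
      rw [hsum]
      exact zsmul_mem_of_nonneg F hzF (by omega)
    have hAF : x - n • z ∈ F := hFface _ h1 _ h2 hABF
    by_cases hA0 : x - n • z = 0
    · exact ⟨n, 1, one_ne_zero, by rw [one_smul, sub_eq_zero.mp hA0]⟩
    · obtain ⟨a, b, ha1, hb1, hab⟩ := hFcomm _ hAF hA0 _ hzF hz0
      refine ⟨(b : ℤ) + (a : ℤ) * n, (a : ℤ), by exact_mod_cast (by omega : a ≠ 0), ?_⟩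
      have habZ : (a : ℤ) • (x - n • z) = (b : ℤ) • z := by
        rw [natCast_zsmul, natCast_zsmul]
        exact hab
      rw [smul_sub, smul_smul, sub_eq_iff_eq_add] at habZ
      rw [habZ, add_smul]
end Ray

section Backward

open Finset

variable {V E : Type*} [Fintype E] {G : Type*} [AddCommGroup G]
variable (s t : E → V) (M : AddSubmonoid G) (ℓ : E → G)

lemma ratCoe_zsmul (z : ℤ) (x : E → ℤ) : ratCoe (z • x) = (z : ℚ) • ratCoe x := by
  funext e
  rw [ratCoe_apply]
  simp only [Pi.smul_apply, smul_eq_mul, ratCoe_apply]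
  push_cast
  ring

lemma exists_emb (hG : AddGroup.FG G)
    (hTF : ∀ (n : ℤ) (g : G), n ≠ 0 → n • g = 0 → g = 0) :
    ∃ (r : ℕ) (em : G →+ (Fin r → ℚ)), Function.Injective em := by
  haveI : Module.Finite ℤ G := Module.Finite.iff_addGroup_fg.mpr hG
  haveI : NoZeroSMulDivisors ℤ G := ⟨fun {n g} h => by
    by_cases hn : n = 0
    · exact Or.inl hn
    · exact Or.inr (hTF n g hn h)⟩
  haveI : Module.Free ℤ G := Module.free_of_finite_type_torsion_free'
  set b := Module.Free.chooseBasis ℤ G with hb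
  set eqv := Fintype.equivFin (Module.Free.ChooseBasisIndex ℤ G) with heqv
  refine ⟨Fintype.card (Module.Free.ChooseBasisIndex ℤ G),
    AddMonoidHom.mk' (fun g i => ((b.repr g) (eqv.symm i) : ℚ)) ?_, ?_⟩
  · intro x y
    funext i
    simp only [map_add, Finsupp.add_apply]
    push_cast
    rfl
  · intro x y h
    apply b.repr.injective
    ext j
    have h1 := congrFun h (eqv j)
    simp only [AddMonoidHom.mk'_apply, Equiv.symm_apply_apply] at h1
    exact_mod_cast h1

lemma exists_mul_period (hdatum : IsTropicalCurveDatum s t M ℓ) (hG : AddGroup.FG G)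
    (hali : IsLogAligned s t M ℓ) (φ : ↥(H1 s t) →+ G) (hφ : BoundedMonodromy s t M ℓ φ) :
    ∃ (D : ℕ) (η : ↥(H1 s t)), 0 < D ∧
      ∀ γ' : ↥(H1 s t), (D : ℤ) • φ γ' = pairing ℓ (η : E → ℤ) (γ' : E → ℤ) := by
  classical
  obtain ⟨hsharp, hsat, hgen, hℓM, hℓ0⟩ := hdatum
  have hTF := tf_of_datum M hsharp hsat
  obtain ⟨r, em, hem⟩ := exists_emb hG hTF
  set PQ : (E → ℚ) →ₗ[ℚ] (E → ℚ) →ₗ[ℚ] (Fin r → ℚ) :=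
    LinearMap.mk₂ ℚ (fun x y => ∑ e, (x e * y e) • em (ℓ e))
      (fun x x' y => by
        rw [← Finset.sum_add_distrib]
        refine Finset.sum_congr rfl fun e _ => ?_
        rw [Pi.add_apply, add_mul, add_smul])
      (fun a x y => by
        rw [Finset.smul_sum]
        refine Finset.sum_congr rfl fun e _ => ?_
        rw [Pi.smul_apply, smul_eq_mul, mul_assoc, mul_smul])
      (fun x y y' => by
        rw [← Finset.sum_add_distrib]
        refine Finset.sum_congr rfl fun e _ => ?_
        rw [Pi.add_apply, mul_add, add_smul])
      (fun a x y => by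
        rw [Finset.smul_sum]
        refine Finset.sum_congr rfl fun e _ => ?_
        rw [Pi.smul_apply, smul_eq_mul, mul_comm a (y e), ← mul_assoc, mul_comm (x e * y e) a,
          mul_smul])
    with hPQdef
  have hPQapp : ∀ x y : E → ℚ, PQ x y = ∑ e, (x e * y e) • em (ℓ e) := fun x y => rfl
  have hPQsymm : ∀ x y : E → ℚ, PQ x y = PQ y x := by
    intro x y
    rw [hPQapp, hPQapp]
    exact Finset.sum_congr rfl fun e _ => by rw [mul_comm]
  have hcompat : ∀ γ γ' : E → ℤ, em (pairing ℓ γ γ') = PQ (ratCoe γ) (ratCoe γ') := by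
    intro γ γ'
    rw [pairing, map_sum, hPQapp]
    refine Finset.sum_congr rfl fun e _ => ?_
    rw [map_zsmul, ratCoe_apply, ratCoe_apply, ← Int.cast_mul, Int.cast_smul_eq_zsmul]
  have hdefQ : ∀ x : E → ℚ, PQ x x = 0 → x = 0 := by
    intro x hx
    obtain ⟨D, hD, hz⟩ := rat_clear_denoms x
    choose y hy using hz
    have h1 : ratCoe y = (D : ℚ) • x := by
      funext e
      rw [ratCoe_apply, hy e]
      rfl
    have h2 : em (pairing ℓ y y) = 0 := by
      rw [hcompat, h1, LinearMap.map_smul₂, map_smul, hx, smul_zero, smul_zero]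
    have h3 : pairing ℓ y y = 0 := hem (by rw [h2, map_zero])
    have h4 : y = 0 := pairing_self_eq_zero M ℓ hsharp hTF hℓM hℓ0 y h3
    funext e
    have h5 := hy e
    rw [h4] at h5
    simp only [Pi.zero_apply, Int.cast_zero] at h5
    have h6 := mul_eq_zero.mp h5.symm
    rcases h6 with h6 | h6
    · exact absurd h6 (by exact_mod_cast hD.ne')
    · exact h6
  obtain ⟨B, hBsub, hBspan, hBind⟩ := exists_linearIndependent ℚ (circuitSet s t)
  haveI hBfin : Fintype B := hBind.setFinite.fintype
  choose dd hdd1 hdd2 using fun i : B =>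
    (hBsub i.2 : ∃ δ : ↥(H1 s t), IsCircuit s t δ ∧ ratCoe (δ : E → ℤ) = (i : E → ℚ))
  set z : B → G := fun i => pairing ℓ (dd i : E → ℤ) (dd i : E → ℤ) with hzdef
  have hz0 : ∀ i, z i ≠ 0 := by
    intro i h
    exact (hdd1 i).1 (pairing_self_eq_zero M ℓ hsharp hTF hℓM hℓ0 _ h)
  set zQ : B → (Fin r → ℚ) := fun i => em (z i) with hzQdef
  choose FF hFF1 hFF2 using fun i : B => hali (dd i) (hdd1 i)
  have hzF : ∀ i, z i ∈ FF i := fun i => pairing_self_mem_ray ℓ _ (hFF2 i)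
  have hratio : ∀ (i : B) (x : G), Bounded M (z i) x → ∃ c : ℚ, em x = c • zQ i := by
    intro i x hb
    obtain ⟨p, q, hq0, hpq⟩ := bounded_to_ray M hsharp (hFF1 i) (hzF i) (hz0 i) hb
    have hq0' : (q : ℚ) ≠ 0 := by exact_mod_cast hq0
    refine ⟨(p : ℚ) / (q : ℚ), ?_⟩
    have h1 := congrArg em hpq
    rw [map_zsmul, map_zsmul, ← Int.cast_smul_eq_zsmul ℚ, ← Int.cast_smul_eq_zsmul ℚ] at h1
    rw [show em (z i) = zQ i from rfl] at h1
    calc em x = (q : ℚ)⁻¹ • ((q : ℚ) • em x) := (inv_smul_smul₀ hq0' _).symm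
    _ = (q : ℚ)⁻¹ • ((p : ℚ) • zQ i) := by rw [h1]
    _ = ((p : ℚ) / (q : ℚ)) • zQ i := by rw [smul_smul, div_eq_mul_inv, mul_comm]
  have hPQji : ∀ i j : B, em (pairing ℓ (dd j : E → ℤ) (dd i : E → ℤ)) = PQ (j : E → ℚ) (i : E → ℚ) := by
    intro i j
    rw [hcompat, hdd2, hdd2]
  have hAex : ∀ i j : B, ∃ c : ℚ, PQ (j : E → ℚ) (i : E → ℚ) = c • zQ i := by
    intro i j
    have hbd : Bounded M (z i) (pairing ℓ (dd j : E → ℤ) (dd i : E → ℤ)) := by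
      have hb := bounded_partialHom s t M ℓ hℓM (dd j : E → ℤ) Finset.univ (dd i)
      have heq : partialHom s t ℓ (dd j : E → ℤ) Finset.univ (dd i)
          = pairing ℓ (dd j : E → ℤ) (dd i : E → ℤ) := rfl
      rwa [heq] at hb
    obtain ⟨c, hc⟩ := hratio i _ hbd
    rw [hPQji] at hc
    exact ⟨c, hc⟩
  choose A hA using hAex
  choose v hv using fun i : B => hratio i (φ (dd i)) (hφ (dd i))
  -- expansion lemma
  have hexp : ∀ (c : B → ℚ) (y : E → ℚ),
      PQ (∑ j : B, c j • (j : E → ℚ)) y = ∑ j : B, c j • PQ (j : E → ℚ) y := by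
    intro c y
    rw [map_sum, LinearMap.sum_apply]
    exact Finset.sum_congr rfl fun j _ => by rw [map_smul, LinearMap.smul_apply]
  -- kernel of the matrix
  have hker : ∀ c : B → ℚ, (∀ i, ∑ j : B, A i j * c j = 0) → c = 0 := by
    intro c hc
    set x : E → ℚ := ∑ j : B, c j • (j : E → ℚ) with hx
    have hx1 : ∀ i : B, PQ x (i : E → ℚ) = 0 := by
      intro i
      rw [hx, hexp]
      have h7 : ∀ j : B, c j • PQ (j : E → ℚ) (i : E → ℚ) = (A i j * c j) • zQ i := by
        intro j
        rw [hA i j, smul_smul, mul_comm]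
      rw [Finset.sum_congr rfl fun j _ => h7 j, ← Finset.sum_smul, hc i, zero_smul]
    have hx2 : PQ x x = 0 := by
      have h9 : PQ x x = ∑ j : B, c j • PQ x (j : E → ℚ) := by
        conv_lhs => rw [show PQ x x = PQ x (∑ j : B, c j • (j : E → ℚ)) from by rw [← hx]]
        rw [map_sum (PQ x)]
        exact Finset.sum_congr rfl fun j _ => map_smul (PQ x) _ _
      rw [h9]
      exact Finset.sum_eq_zero fun j _ => by rw [hx1 j, smul_zero]
    have hx0 : x = 0 := hdefQ x hx2
    funext i
    exact Fintype.linearIndependent_iff.mp hBind c (by rw [← hx]; exact hx0) i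
  -- matrix surjectivity
  set Amat : Matrix B B ℚ := Matrix.of (fun i j => A i j) with hAmat
  have hinj : Function.Injective Amat.mulVecLin := by
    rw [injective_iff_map_eq_zero]
    intro c hc
    refine hker c fun i => ?_
    have h2 := congrFun hc i
    rw [Matrix.mulVecLin_apply] at h2
    simp only [Pi.zero_apply] at h2
    calc ∑ j : B, A i j * c j = Amat.mulVec c i := by
          simp [Matrix.mulVec, dotProduct, hAmat]
    _ = 0 := h2
  have hsurj : Function.Surjective Amat.mulVecLin :=
    LinearMap.injective_iff_surjective.mp hinj
  obtain ⟨d, hd⟩ := hsurj v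
  have hdi : ∀ i, ∑ j : B, A i j * d j = v i := by
    intro i
    have h2 := congrFun hd i
    rw [Matrix.mulVecLin_apply] at h2
    calc ∑ j : B, A i j * d j = Amat.mulVec d i := by
          simp [Matrix.mulVec, dotProduct, hAmat]
    _ = v i := h2
  -- the rational solution vector
  set xd : E → ℚ := ∑ j : B, d j • (j : E → ℚ) with hxd
  have hmaini : ∀ i : B, PQ xd (i : E → ℚ) = em (φ (dd i)) := by
    intro i
    rw [hxd, hexp]
    have h7 : ∀ j : B, d j • PQ (j : E → ℚ) (i : E → ℚ) = (A i j * d j) • zQ i := by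
      intro j
      rw [hA i j, smul_smul, mul_comm]
    rw [Finset.sum_congr rfl fun j _ => h7 j, ← Finset.sum_smul, hdi i, ← hv i]
  -- main claim
  have hmain : ∀ γ' : ↥(H1 s t), em (φ γ') = PQ xd (ratCoe (γ' : E → ℤ)) := by
    intro γ'
    have hsp : ratCoe (γ' : E → ℤ) ∈ Submodule.span ℚ B := by
      rw [hBspan]
      exact span_circuits' s t γ'
    obtain ⟨nn, f, g, hfg⟩ := Submodule.mem_span_set'.mp hsp
    obtain ⟨D₂, hD₂, hD₂z⟩ := rat_clear_denoms f
    choose w₂ hw₂ using hD₂z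
    have hD₂ne : (D₂ : ℚ) ≠ 0 := by exact_mod_cast hD₂.ne'
    have hint : (D₂ : ℤ) • γ' = ∑ i : Fin nn, w₂ i • dd ⟨g i, (g i).2⟩ := by
      apply Subtype.ext
      apply ratCoe_injective
      have hco1 : ((((D₂ : ℤ) • γ') : ↥(H1 s t)) : E → ℤ) = (D₂ : ℤ) • (γ' : E → ℤ) := rfl
      have hco2 : (((∑ i : Fin nn, w₂ i • dd ⟨g i, (g i).2⟩) : ↥(H1 s t)) : E → ℤ)
          = ∑ i : Fin nn, w₂ i • ((dd ⟨g i, (g i).2⟩ : ↥(H1 s t)) : E → ℤ) := by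
        rw [show (((∑ i : Fin nn, w₂ i • dd ⟨g i, (g i).2⟩) : ↥(H1 s t)) : E → ℤ)
            = (H1 s t).subtype (∑ i : Fin nn, w₂ i • dd ⟨g i, (g i).2⟩) from rfl]
        rw [map_sum]
        rfl
      rw [hco1, hco2, ratCoe_zsmul, map_sum]
      have h8 : ∀ i : Fin nn, ratCoe (w₂ i • ((dd ⟨g i, (g i).2⟩ : ↥(H1 s t)) : E → ℤ))
          = ((D₂ : ℚ) * f i) • ((g i : E → ℚ)) := by
        intro i
        rw [ratCoe_zsmul, hdd2, hw₂ i]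
      rw [Finset.sum_congr rfl fun i _ => h8 i]
      rw [← hfg, Finset.smul_sum]
      exact Finset.sum_congr rfl fun i _ => by rw [smul_smul]; norm_cast
    have hφint : (D₂ : ℤ) • φ γ' = ∑ i : Fin nn, w₂ i • φ (dd ⟨g i, (g i).2⟩) := by
      rw [← map_zsmul φ, hint, map_sum]
      exact Finset.sum_congr rfl fun i _ => map_zsmul φ _ _
    have h6 : (D₂ : ℚ) • em (φ γ') = ∑ i : Fin nn, (w₂ i : ℚ) • em (φ (dd ⟨g i, (g i).2⟩)) := by
      have := congrArg em hφint
      rw [map_zsmul, map_sum, ← Int.cast_smul_eq_zsmul ℚ] at this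
      rw [show ((D₂ : ℤ) : ℚ) = (D₂ : ℚ) from by push_cast; rfl] at this
      rw [this]
      exact Finset.sum_congr rfl fun i _ => by rw [map_zsmul, ← Int.cast_smul_eq_zsmul ℚ]
    have h7 : (D₂ : ℚ) • PQ xd (ratCoe (γ' : E → ℤ))
        = ∑ i : Fin nn, (w₂ i : ℚ) • em (φ (dd ⟨g i, (g i).2⟩)) := by
      rw [← map_smul (PQ xd), ← hfg, Finset.smul_sum, map_sum (PQ xd)]
      refine Finset.sum_congr rfl fun i _ => ?_
      rw [smul_smul, ← hw₂ i, map_smul (PQ xd)]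
      congr 1
      exact hmaini ⟨g i, (g i).2⟩
    apply smul_right_injective (Fin r → ℚ) hD₂ne
    show (D₂ : ℚ) • em (φ γ') = (D₂ : ℚ) • PQ xd (ratCoe ((γ' : ↥(H1 s t)) : E → ℤ))
    rw [h6, h7]
  -- clear denominators of d and conclude
  obtain ⟨D, hD, hDz⟩ := rat_clear_denoms d
  choose w hw using hDz
  set η : ↥(H1 s t) := ∑ j : B, w j • dd j with hη
  refine ⟨D, η, hD, fun γ' => ?_⟩
  apply hem
  have hL : em ((D : ℤ) • φ γ') = (D : ℚ) • em (φ γ') := by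
    rw [map_zsmul, ← Int.cast_smul_eq_zsmul ℚ]
    norm_num
  have hηco : ratCoe ((η : ↥(H1 s t)) : E → ℤ) = (D : ℚ) • xd := by
    have hco2 : ((η : ↥(H1 s t)) : E → ℤ)
        = ∑ j : B, w j • ((dd j : ↥(H1 s t)) : E → ℤ) := by
      rw [hη]
      rw [show (((∑ j : B, w j • dd j) : ↥(H1 s t)) : E → ℤ)
          = (H1 s t).subtype (∑ j : B, w j • dd j) from rfl]
      rw [map_sum]
      rfl
    rw [hco2, map_sum, hxd, Finset.smul_sum]
    refine Finset.sum_congr rfl fun j _ => ?_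
    rw [ratCoe_zsmul, hdd2, hw j, smul_smul]
  have hR : em (pairing ℓ (η : E → ℤ) (γ' : E → ℤ))
      = (D : ℚ) • PQ xd (ratCoe (γ' : E → ℤ)) := by
    rw [hcompat, hηco, map_smul, LinearMap.smul_apply]
  rw [hL, hR, hmain γ']

end Backward

section Final

open Finset

variable {V E : Type*} [Fintype E] {G : Type*} [AddCommGroup G]
variable (s t : E → V) (M : AddSubmonoid G) (ℓ : E → G)

lemma finite_of_aligned (hdatum : IsTropicalCurveDatum s t M ℓ) (hG : AddGroup.FG G)
    (hali : IsLogAligned s t M ℓ) : Finite (TroPic0 s t M ℓ) := by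
  classical
  obtain ⟨hsharp, hsat, hgen, hℓM, hℓ0⟩ := id hdatum
  have hTF := tf_of_datum M hsharp hsat
  haveI : Module.Finite ℤ G := Module.Finite.iff_addGroup_fg.mpr hG
  haveI hN1 : IsNoetherian ℤ (E → ℤ) := isNoetherian_of_isNoetherianRing_of_finite ℤ _
  haveI hfin1 : Module.Finite ℤ ↥(AddSubgroup.toIntSubmodule (H1 s t)) :=
    Module.Finite.iff_fg.mpr (IsNoetherian.noetherian _)
  haveI hfin2 : Module.Finite ℤ ↥(H1 s t) := hfin1
  haveI : NoZeroSMulDivisors ℤ ↥(H1 s t) := ⟨fun {n γ} h => by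
    by_cases hn : n = 0
    · exact Or.inl hn
    · refine Or.inr (Subtype.ext (funext fun e => ?_))
      have h2 : ((n • γ : ↥(H1 s t)) : E → ℤ) e = 0 := by rw [h]; rfl
      have h3 : n * (γ : E → ℤ) e = 0 := h2
      rcases mul_eq_zero.mp h3 with h4 | h4
      · exact absurd h4 hn
      · exact h4⟩
  haveI : Module.Free ℤ ↥(H1 s t) := Module.free_of_finite_type_torsion_free'
  haveI : Module.Finite ℤ (↥(H1 s t) →+ G) := Module.Finite.addMonoidHom _ _
  haveI hNhom : IsNoetherian ℤ (↥(H1 s t) →+ G) :=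
    isNoetherian_of_isNoetherianRing_of_finite ℤ _
  haveI hfinBM : Module.Finite ℤ ↥(AddSubgroup.toIntSubmodule (BMHom s t M ℓ)) :=
    Module.Finite.iff_fg.mpr (IsNoetherian.noetherian _)
  haveI : AddGroup.FG ↥(BMHom s t M ℓ) := Module.Finite.iff_addGroup_fg.mp hfinBM
  haveI : AddGroup.FG (TroPic0 s t M ℓ) :=
    AddGroup.fg_of_surjective (f := QuotientAddGroup.mk' (periods s t M ℓ))
      (QuotientAddGroup.mk'_surjective _)
  apply AddCommGroup.finite_of_fg_torsion
  intro x
  induction x using QuotientAddGroup.induction_on with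
  | _ φx =>
    obtain ⟨D, η, hD, hper⟩ := exists_mul_period s t M ℓ hdatum hG hali φx.1 φx.2
    rw [isOfFinAddOrder_iff_nsmul_eq_zero]
    refine ⟨D, hD, ?_⟩
    have h1 : D • (QuotientAddGroup.mk (s := periods s t M ℓ) φx)
        = QuotientAddGroup.mk (D • φx) := rfl
    rw [h1, QuotientAddGroup.eq_zero_iff]
    rw [periods, AddSubgroup.mem_comap, AddMonoidHom.mem_range]
    refine ⟨η, ?_⟩
    ext γ'
    have h2 : periodMap s t ℓ η γ' = pairing ℓ (η : E → ℤ) (γ' : E → ℤ) := rfl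
    have h3 : ((BMHom s t M ℓ).subtype (D • φx)) γ' = D • (φx.1 γ') := rfl
    rw [h2, h3, ← hper γ', natCast_zsmul]

end Final

/-- pointwise core of Theorem 8.2 of the paper: for a connected tropical
curve datum, the tropical Jacobian is finite if and only if the datum is log aligned. -/
theorem troPic0_finite_iff_logAligned {V E : Type*} [Fintype V] [Fintype E] [Nonempty V]
    {G : Type*} [AddCommGroup G]
    (s t : E → V) (M : AddSubmonoid G) (ℓ : E → G)
    (hG : AddGroup.FG G) (hdatum : IsTropicalCurveDatum s t M ℓ)
    (hconn : GraphConnected s t) :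
    Finite (TroPic0 s t M ℓ) ↔ IsLogAligned s t M ℓ := by
  constructor
  · intro hfin
    exact aligned_of_finite s t M ℓ hdatum hfin
  · intro hali
    exact finite_of_aligned s t M ℓ hdatum hG hali

end TropicalNeron
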